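/- For every odd integer n ≥ 1 there exists a globally simple tight relative non-zero sum Heffter array NH_{n²}(n;n): an n×n matrix A = (a_{i,j}) with entries in Z_{3n²} such that the multiset formed by all a_{i,j} and −a_{i,j} contains every element of Z_{3n²} ∖ J exactly once, where J = 3·Z_{3n²} (the multiples of 3, the subgroup of order n²), and for every row i the partial sums a_{i,1} + ⋯ + a_{i,k} (1 ≤ k ≤ n) are nonzero and pairwise distinct in Z_{3n²}, and for every column j the partial sums a_{1,j} + ⋯ + a_{k,j} (1 ≤ k ≤ n) are nonzero and pairwise distinct in Z_{3n²}. -/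
import Mathlib

namespace Stmt5Aux

/-- The array: `arr n i j = (-1)^(i+j) * (3*((i-1) + n*(j-1)) + 1)` in `ZMod (3n²)`. -/
def arr (n : ℕ) (i j : ℕ) : ZMod (3 * n ^ 2) :=
  (-1) ^ (i + j) * ((3 * ((i - 1) + n * (j - 1)) + 1 : ℕ) : ZMod (3 * n ^ 2))

/-- `u n m = 3m+1` in `ZMod (3n²)`. -/
def u (n : ℕ) (m : ℕ) : ZMod (3 * n ^ 2) := ((3 * m + 1 : ℕ) : ZMod (3 * n ^ 2))

/-- closed form of prefix sums, as an integer -/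
def sIntAux (σ c δ k : ℕ) : ℤ :=
  if k % 2 = 0 then (-1) ^ σ * (3 * (δ : ℤ) * ((k / 2 : ℕ) : ℤ))
  else (-1) ^ (σ + 1) * ((c : ℤ) + 3 * (δ : ℤ) * ((k / 2 : ℕ) : ℤ))

lemma strip_sign {e : ℕ} {a b : ℤ} (h : a ∣ (-1) ^ e * b) : a ∣ b := by
  rcases Nat.even_or_odd e with he | he
  · rwa [he.neg_one_pow, one_mul] at h
  · rw [he.neg_one_pow, neg_one_mul, dvd_neg] at h; exact h

lemma dvd_congr {D x y : ℤ} (h : D ∣ x) (e : y = x) : D ∣ y := e ▸ h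

lemma sIntAux_succ (σ c δ k : ℕ) :
    sIntAux σ c δ (k + 1) = sIntAux σ c δ k + (-1 : ℤ) ^ (σ + (k + 1)) * ((c : ℤ) + 3 * δ * k) := by
  rcases Nat.even_or_odd k with ⟨m, hm⟩ | ⟨m, hm⟩
  · subst hm
    have h1 : (m + m) % 2 = 0 := by omega
    have h2 : (m + m + 1) % 2 = 1 := by omega
    have h3 : (m + m) / 2 = m := by omega
    have h4 : (m + m + 1) / 2 = m := by omega
    have h5 : (-1 : ℤ) ^ (σ + (m + m + 1)) = -(-1 : ℤ) ^ σ := by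
      rw [pow_add, show ((-1 : ℤ)) ^ (m + m + 1) = -1 from Odd.neg_one_pow ⟨m, by omega⟩]; ring
    simp only [sIntAux, h1, h2, h3, h4]
    rw [h5]
    norm_num
    push_cast
    ring
  · subst hm
    have h1 : (2 * m + 1) % 2 = 1 := by omega
    have h2 : (2 * m + 1 + 1) % 2 = 0 := by omega
    have h3 : (2 * m + 1) / 2 = m := by omega
    have h4 : (2 * m + 1 + 1) / 2 = m + 1 := by omega
    have h5 : (-1 : ℤ) ^ (σ + (2 * m + 1 + 1)) = (-1 : ℤ) ^ σ := by
      rw [pow_add, show ((-1 : ℤ)) ^ (2 * m + 1 + 1) = 1 from Even.neg_one_pow ⟨m + 1, by omega⟩]; ring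
    simp only [sIntAux, h1, h2, h3, h4]
    rw [h5]
    norm_num
    push_cast
    ring

lemma sum_eq {N : ℕ} (σ c δ n : ℕ) (g : ℕ → ZMod N)
    (hg : ∀ l, 1 ≤ l → l ≤ n → g l = (-1) ^ (σ + l) * ((c + 3 * δ * (l - 1) : ℕ) : ZMod N)) :
    ∀ k, k ≤ n → (∑ l ∈ Finset.Icc 1 k, g l) = ((sIntAux σ c δ k : ℤ) : ZMod N) := by
  intro k
  induction k with
  | zero =>
    intro _
    rw [show Finset.Icc 1 0 = ∅ from rfl, Finset.sum_empty]
    simp [sIntAux]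
  | succ k ih =>
    intro hk
    rw [Finset.sum_Icc_succ_top (by omega : 1 ≤ k + 1), ih (by omega),
      hg (k + 1) (by omega) hk, sIntAux_succ]
    have h : k + 1 - 1 = k := rfl
    rw [h]
    push_cast
    ring

lemma sIntAux_not_dvd (n σ c δ k : ℕ) (hc : c % 3 = 1)
    (hδ1 : 1 ≤ δ) (hδn : δ ≤ n) (hk1 : 1 ≤ k) (hkn : k ≤ n) :
    ¬ ((3 * (n : ℤ) ^ 2) ∣ sIntAux σ c δ k) := by
  intro h
  by_cases h0 : k % 2 = 0
  · rw [sIntAux, if_pos h0] at h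
    have h2 : (3 * (n : ℤ) ^ 2) ∣ 3 * (δ : ℤ) * ((k / 2 : ℕ) : ℤ) := strip_sign h
    have e1 : (1 : ℤ) ≤ ((k / 2 : ℕ) : ℤ) := by exact_mod_cast (show 1 ≤ k / 2 by omega)
    have e2 : ((k / 2 : ℕ) : ℤ) < (n : ℤ) := by exact_mod_cast (show k / 2 < n by omega)
    have e3 : (1 : ℤ) ≤ (δ : ℤ) := by exact_mod_cast hδ1
    have e4 : (δ : ℤ) ≤ (n : ℤ) := by exact_mod_cast hδn
    have hpos : (0 : ℤ) < 3 * (δ : ℤ) * ((k / 2 : ℕ) : ℤ) := by nlinarith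
    have hlt : 3 * (δ : ℤ) * ((k / 2 : ℕ) : ℤ) < 3 * (n : ℤ) ^ 2 := by nlinarith
    have := Int.le_of_dvd hpos h2
    omega
  · rw [sIntAux, if_neg h0] at h
    have h2 : (3 * (n : ℤ) ^ 2) ∣ (c : ℤ) + 3 * (δ : ℤ) * ((k / 2 : ℕ) : ℤ) := strip_sign h
    have h3 : (3 : ℤ) ∣ (c : ℤ) + 3 * ((δ : ℤ) * ((k / 2 : ℕ) : ℤ)) :=
      dvd_congr (dvd_trans ⟨(n : ℤ) ^ 2, by ring⟩ h2) (by ring)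
    have hc' : (c : ℤ) % 3 = 1 := by omega
    omega

lemma abs_bound (n δ : ℕ) (a b : ℤ) (e3 : 1 ≤ (δ : ℤ)) (e4 : (δ : ℤ) ≤ (n : ℤ))
    (h1 : 0 ≤ a) (h2 : a < (n : ℤ)) (h3 : 0 ≤ b) (h4 : b < (n : ℤ)) :
    |3 * (δ : ℤ) * (a - b)| < 3 * (n : ℤ) ^ 2 := by
  rw [abs_mul, abs_of_nonneg (by positivity : (0 : ℤ) ≤ 3 * (δ : ℤ))]
  have h5 : |a - b| < (n : ℤ) := abs_sub_lt_iff.mpr ⟨by linarith, by linarith⟩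
  have h6 : 0 ≤ |a - b| := abs_nonneg _
  nlinarith

lemma sIntAux_inj (n σ c δ k k' : ℕ) (hc : c % 3 = 1)
    (hδ1 : 1 ≤ δ) (hδn : δ ≤ n) (hk1 : 1 ≤ k) (hkn : k ≤ n) (hk1' : 1 ≤ k') (hkn' : k' ≤ n)
    (h : (3 * (n : ℤ) ^ 2) ∣ sIntAux σ c δ k - sIntAux σ c δ k') : k = k' := by
  have e2 : ((k / 2 : ℕ) : ℤ) < (n : ℤ) := by exact_mod_cast (show k / 2 < n by omega)
  have e2' : ((k' / 2 : ℕ) : ℤ) < (n : ℤ) := by exact_mod_cast (show k' / 2 < n by omega)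
  have e0 : (0 : ℤ) ≤ ((k / 2 : ℕ) : ℤ) := Int.natCast_nonneg _
  have e0' : (0 : ℤ) ≤ ((k' / 2 : ℕ) : ℤ) := Int.natCast_nonneg _
  have e3 : (1 : ℤ) ≤ (δ : ℤ) := by exact_mod_cast hδ1
  have e4 : (δ : ℤ) ≤ (n : ℤ) := by exact_mod_cast hδn
  by_cases h0 : k % 2 = 0 <;> by_cases h0' : k' % 2 = 0
  · rw [sIntAux, sIntAux, if_pos h0, if_pos h0'] at h
    have h2 : (3 * (n : ℤ) ^ 2) ∣
        (-1 : ℤ) ^ σ * (3 * (δ : ℤ) * (((k / 2 : ℕ) : ℤ) - ((k' / 2 : ℕ) : ℤ))) :=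
      dvd_congr h (by ring)
    have h3 := strip_sign h2
    have h4 : 3 * (δ : ℤ) * (((k / 2 : ℕ) : ℤ) - ((k' / 2 : ℕ) : ℤ)) = 0 :=
      Int.eq_zero_of_abs_lt_dvd h3 (abs_bound n δ _ _ e3 e4 e0 e2 e0' e2')
    have h5 : ((k / 2 : ℕ) : ℤ) = ((k' / 2 : ℕ) : ℤ) := by
      rcases mul_eq_zero.mp h4 with h' | h'
      · exfalso; rcases mul_eq_zero.mp h' with h'' | h'' <;> omega
      · linarith [sub_eq_zero.mp h']
    have : k / 2 = k' / 2 := by exact_mod_cast h5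
    omega
  · rw [sIntAux, sIntAux, if_pos h0, if_neg h0'] at h
    exfalso
    have h2 : (3 * (n : ℤ) ^ 2) ∣
        (-1 : ℤ) ^ σ * (3 * (δ : ℤ) * ((k / 2 : ℕ) : ℤ) + (c : ℤ) + 3 * (δ : ℤ) * ((k' / 2 : ℕ) : ℤ)) :=
      dvd_congr h (by ring)
    have h3 : (3 : ℤ) ∣ (c : ℤ) + 3 * ((δ : ℤ) * ((k / 2 : ℕ) : ℤ) + (δ : ℤ) * ((k' / 2 : ℕ) : ℤ)) :=
      dvd_congr (dvd_trans ⟨(n : ℤ) ^ 2, by ring⟩ (strip_sign h2)) (by ring)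
    have hc' : (c : ℤ) % 3 = 1 := by omega
    omega
  · rw [sIntAux, sIntAux, if_neg h0, if_pos h0'] at h
    exfalso
    have h2 : (3 * (n : ℤ) ^ 2) ∣
        (-1 : ℤ) ^ σ * (3 * (δ : ℤ) * ((k' / 2 : ℕ) : ℤ) + (c : ℤ) + 3 * (δ : ℤ) * ((k / 2 : ℕ) : ℤ)) :=
      dvd_congr (dvd_neg.mpr h) (by ring)
    have h3 : (3 : ℤ) ∣ (c : ℤ) + 3 * ((δ : ℤ) * ((k / 2 : ℕ) : ℤ) + (δ : ℤ) * ((k' / 2 : ℕ) : ℤ)) :=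
      dvd_congr (dvd_trans ⟨(n : ℤ) ^ 2, by ring⟩ (strip_sign h2)) (by ring)
    have hc' : (c : ℤ) % 3 = 1 := by omega
    omega
  · rw [sIntAux, sIntAux, if_neg h0, if_neg h0'] at h
    have h2 : (3 * (n : ℤ) ^ 2) ∣
        (-1 : ℤ) ^ (σ + 1) * (3 * (δ : ℤ) * (((k / 2 : ℕ) : ℤ) - ((k' / 2 : ℕ) : ℤ))) :=
      dvd_congr h (by ring)
    have h3 := strip_sign h2
    have h4 : 3 * (δ : ℤ) * (((k / 2 : ℕ) : ℤ) - ((k' / 2 : ℕ) : ℤ)) = 0 :=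
      Int.eq_zero_of_abs_lt_dvd h3 (abs_bound n δ _ _ e3 e4 e0 e2 e0' e2')
    have h5 : ((k / 2 : ℕ) : ℤ) = ((k' / 2 : ℕ) : ℤ) := by
      rcases mul_eq_zero.mp h4 with h' | h'
      · exfalso; rcases mul_eq_zero.mp h' with h'' | h'' <;> omega
      · linarith [sub_eq_zero.mp h']
    have : k / 2 = k' / 2 := by exact_mod_cast h5
    omega


lemma cast3_one (m : ℕ) : ((3 * m + 1 : ℕ) : ZMod 3) = 1 := by
  push_cast
  rw [show (3 : ZMod 3) = 0 by decide]
  ring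

/-- projections to `ZMod 3` -/
def pi3 (n : ℕ) : ZMod (3 * n ^ 2) →+* ZMod 3 := ZMod.castHom ⟨n ^ 2, rfl⟩ (ZMod 3)

lemma pi3_u (n m : ℕ) : pi3 n (u n m) = 1 := by
  rw [u, map_natCast, cast3_one]

lemma u_inj (n : ℕ) {m m' : ℕ} (hm : m < n ^ 2) (hm' : m' < n ^ 2) (h : u n m = u n m') :
    m = m' := by
  have h2 := congrArg ZMod.val h
  simp only [u, ZMod.val_natCast] at h2
  rw [Nat.mod_eq_of_lt (by omega), Nat.mod_eq_of_lt (by omega)] at h2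
  omega

lemma u_ne_neg (n m m' : ℕ) : u n m ≠ -u n m' := by
  intro h
  have h2 := congrArg (pi3 n) h
  rw [pi3_u, map_neg, pi3_u] at h2
  exact absurd h2 (by decide)

lemma pair_arr (n i j : ℕ) :
    ({arr n i j, -arr n i j} : Multiset (ZMod (3 * n ^ 2))) =
      {u n ((i - 1) + n * (j - 1)), -u n ((i - 1) + n * (j - 1))} := by
  rcases Nat.even_or_odd (i + j) with he | ho
  · rw [arr, he.neg_one_pow, one_mul]; rfl
  · rw [arr, ho.neg_one_pow, neg_one_mul, neg_neg]
    exact Multiset.pair_comm _ _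

lemma count_formula (n : ℕ) (x : ZMod (3 * n ^ 2)) :
    Multiset.count x
      (((Finset.Icc 1 n ×ˢ Finset.Icc 1 n).val).bind
        (fun p => ({arr n p.1 p.2, -arr n p.1 p.2} : Multiset (ZMod (3 * n ^ 2))))) =
      ∑ p ∈ Finset.Icc 1 n ×ˢ Finset.Icc 1 n,
        Multiset.count x ({arr n p.1 p.2, -arr n p.1 p.2} : Multiset (ZMod (3 * n ^ 2))) := by
  rw [Multiset.count_bind]
  rfl

lemma count_zero (n : ℕ) (x : ZMod (3 * n ^ 2))
    (hx : ∃ y : ZMod (3 * n ^ 2), x = ((3 : ℕ) : ZMod (3 * n ^ 2)) * y) :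
    Multiset.count x
      (((Finset.Icc 1 n ×ˢ Finset.Icc 1 n).val).bind
        (fun p => ({arr n p.1 p.2, -arr n p.1 p.2} : Multiset (ZMod (3 * n ^ 2))))) = 0 := by
  obtain ⟨y, hy⟩ := hx
  have hx3 : pi3 n x = 0 := by
    rw [hy, map_mul, map_natCast, ZMod.natCast_self, zero_mul]
  rw [count_formula]
  apply Finset.sum_eq_zero
  intro p _
  rw [pair_arr, Multiset.count_eq_zero]
  intro hmem
  rcases (by simpa using hmem : x = u n ((p.1 - 1) + n * (p.2 - 1)) ∨
      x = -u n ((p.1 - 1) + n * (p.2 - 1))) with h | h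
  · rw [h, pi3_u] at hx3
    exact absurd hx3 (by decide)
  · rw [h, map_neg, pi3_u] at hx3
    exact absurd hx3 (by decide)

lemma count_one (n : ℕ) (hn : 1 ≤ n) (x : ZMod (3 * n ^ 2))
    (hx : ¬ ∃ y : ZMod (3 * n ^ 2), x = ((3 : ℕ) : ZMod (3 * n ^ 2)) * y) :
    Multiset.count x
      (((Finset.Icc 1 n ×ˢ Finset.Icc 1 n).val).bind
        (fun p => ({arr n p.1 p.2, -arr n p.1 p.2} : Multiset (ZMod (3 * n ^ 2))))) = 1 := by
  have h0n : 0 < n := hn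
  haveI : NeZero (3 * n ^ 2) := ⟨by positivity⟩
  have hvlt : x.val < 3 * n ^ 2 := ZMod.val_lt x
  have hxv : ((x.val : ℕ) : ZMod (3 * n ^ 2)) = x := by
    rw [ZMod.natCast_val, ZMod.cast_id]
  have h3 : x.val % 3 ≠ 0 := by
    intro h
    exact hx ⟨((x.val / 3 : ℕ) : ZMod (3 * n ^ 2)), by
      rw [← Nat.cast_mul, show 3 * (x.val / 3) = x.val by omega, hxv]⟩
  obtain ⟨m, hm, hxm⟩ : ∃ m, m < n ^ 2 ∧ (x = u n m ∨ x = -u n m) := by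
    by_cases hr : x.val % 3 = 1
    · refine ⟨x.val / 3, by omega, Or.inl ?_⟩
      rw [u, show 3 * (x.val / 3) + 1 = x.val by omega, hxv]
    · have hr2 : x.val % 3 = 2 := by omega
      refine ⟨(3 * n ^ 2 - x.val) / 3, by omega, Or.inr ?_⟩
      have key : ((3 * n ^ 2 - x.val : ℕ) : ZMod (3 * n ^ 2)) = -x := by
        rw [Nat.cast_sub (le_of_lt hvlt), ZMod.natCast_self, hxv, zero_sub]
      rw [u, show 3 * ((3 * n ^ 2 - x.val) / 3) + 1 = 3 * n ^ 2 - x.val by omega, key, neg_neg]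
  have h1 : m % n < n := Nat.mod_lt _ h0n
  have h2 : m / n < n := by
    rw [Nat.div_lt_iff_lt_mul h0n]
    calc m < n ^ 2 := hm
      _ = n * n := sq n
  have hmem : ((m % n + 1, m / n + 1) : ℕ × ℕ) ∈ Finset.Icc 1 n ×ˢ Finset.Icc 1 n := by
    rw [Finset.mem_product]
    constructor
    · show m % n + 1 ∈ Finset.Icc 1 n
      rw [Finset.mem_Icc]
      exact ⟨Nat.le_add_left 1 _, Nat.succ_le_of_lt h1⟩
    · show m / n + 1 ∈ Finset.Icc 1 n
      rw [Finset.mem_Icc]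
      exact ⟨Nat.le_add_left 1 _, Nat.succ_le_of_lt h2⟩
  have hcell : (((m % n + 1, m / n + 1) : ℕ × ℕ).1 - 1) +
      n * (((m % n + 1, m / n + 1) : ℕ × ℕ).2 - 1) = m := by
    show (m % n + 1 - 1) + n * (m / n + 1 - 1) = m
    simp only [Nat.add_sub_cancel]
    exact Nat.mod_add_div m n
  have hcell_inv : ∀ p : ℕ × ℕ, p ∈ Finset.Icc 1 n ×ˢ Finset.Icc 1 n →
      (p.1 - 1) + n * (p.2 - 1) = m → p = ((m % n + 1, m / n + 1) : ℕ × ℕ) := by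
    intro p hp hpm
    rw [Finset.mem_product, Finset.mem_Icc, Finset.mem_Icc] at hp
    have e1 : p.1 - 1 < n := by omega
    have e2 : m % n = p.1 - 1 := by
      rw [← hpm, Nat.add_mul_mod_self_left, Nat.mod_eq_of_lt e1]
    have e3 : m / n = p.2 - 1 := by
      rw [← hpm, Nat.add_mul_div_left _ _ h0n, Nat.div_eq_of_lt e1, zero_add]
    refine Prod.ext_iff.mpr ⟨?_, ?_⟩
    · show p.1 = m % n + 1
      omega
    · show p.2 = m / n + 1
      omega
  have hside : ∀ p ∈ Finset.Icc 1 n ×ˢ Finset.Icc 1 n, p ≠ ((m % n + 1, m / n + 1) : ℕ × ℕ) →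
      Multiset.count x ({arr n p.1 p.2, -arr n p.1 p.2} : Multiset (ZMod (3 * n ^ 2))) = 0 := by
    intro p hp hne
    have hplt : (p.1 - 1) + n * (p.2 - 1) < n ^ 2 := by
      rw [Finset.mem_product, Finset.mem_Icc, Finset.mem_Icc] at hp
      have e2 : n * (p.2 - 1) ≤ n * (n - 1) := Nat.mul_le_mul_left n (by omega)
      have key : n * (n - 1) + n = n * n := by
        obtain ⟨k, rfl⟩ : ∃ k, n = k + 1 := ⟨n - 1, by omega⟩
        simp only [Nat.add_sub_cancel]
        ring
      have hsq : n ^ 2 = n * n := sq n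
      omega
    have hmpm : (p.1 - 1) + n * (p.2 - 1) ≠ m := fun h => hne (hcell_inv p hp h)
    rw [pair_arr, Multiset.count_eq_zero]
    intro hmem'
    rcases (by simpa using hmem' : x = u n ((p.1 - 1) + n * (p.2 - 1)) ∨
        x = -u n ((p.1 - 1) + n * (p.2 - 1))) with h' | h' <;>
      rcases hxm with h | h
    · exact hmpm (u_inj n hplt hm (h'.symm.trans h))
    · exact u_ne_neg n ((p.1 - 1) + n * (p.2 - 1)) m (h'.symm.trans h)
    · exact u_ne_neg n m ((p.1 - 1) + n * (p.2 - 1)) (h.symm.trans h')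
    · exact hmpm (u_inj n hplt hm (neg_inj.mp (h'.symm.trans h)))
  rw [count_formula, Finset.sum_eq_single_of_mem _ hmem hside, pair_arr, hcell]
  rcases hxm with h | h
  · rw [h, show ({u n m, -u n m} : Multiset (ZMod (3 * n ^ 2))) = u n m ::ₘ {-u n m} from rfl,
      Multiset.count_cons_self, Multiset.count_singleton, if_neg (u_ne_neg n m m)]
  · rw [h, show ({u n m, -u n m} : Multiset (ZMod (3 * n ^ 2))) = u n m ::ₘ {-u n m} from rfl,
      Multiset.count_cons_of_ne (fun hh => u_ne_neg n m m hh.symm),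
      Multiset.count_singleton_self]

end Stmt5Aux

/-- Proposition 3.7: for every odd n ≥ 1 there exists a globally simple tight
relative non-zero sum Heffter array NH_{n²}(n;n) over Z_{3n²}, where the
subgroup J of order n² consists of the multiples of 3. -/
theorem stmt5 (n : ℕ) (hn : 1 ≤ n) (hodd : Odd n) :
    ∃ A : ℕ → ℕ → ZMod (3 * n ^ 2),
      (∀ x : ZMod (3 * n ^ 2),
        (∃ y : ZMod (3 * n ^ 2), x = ((3 : ℕ) : ZMod (3 * n ^ 2)) * y) →
        Multiset.count x
          (((Finset.Icc 1 n ×ˢ Finset.Icc 1 n).val).bind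
            (fun p => ({A p.1 p.2, -A p.1 p.2} : Multiset (ZMod (3 * n ^ 2))))) = 0) ∧
      (∀ x : ZMod (3 * n ^ 2),
        ¬(∃ y : ZMod (3 * n ^ 2), x = ((3 : ℕ) : ZMod (3 * n ^ 2)) * y) →
        Multiset.count x
          (((Finset.Icc 1 n ×ˢ Finset.Icc 1 n).val).bind
            (fun p => ({A p.1 p.2, -A p.1 p.2} : Multiset (ZMod (3 * n ^ 2))))) = 1) ∧
      (∀ i ∈ Finset.Icc 1 n, ∀ k ∈ Finset.Icc 1 n,
        (∑ j ∈ Finset.Icc 1 k, A i j) ≠ 0) ∧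
      (∀ i ∈ Finset.Icc 1 n, ∀ k ∈ Finset.Icc 1 n, ∀ k' ∈ Finset.Icc 1 n,
        (∑ j ∈ Finset.Icc 1 k, A i j) = (∑ j ∈ Finset.Icc 1 k', A i j) → k = k') ∧
      (∀ j ∈ Finset.Icc 1 n, ∀ k ∈ Finset.Icc 1 n,
        (∑ i ∈ Finset.Icc 1 k, A i j) ≠ 0) ∧
      (∀ j ∈ Finset.Icc 1 n, ∀ k ∈ Finset.Icc 1 n, ∀ k' ∈ Finset.Icc 1 n,
        (∑ i ∈ Finset.Icc 1 k, A i j) = (∑ i ∈ Finset.Icc 1 k', A i j) → k = k') := by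
  have h0n : 0 < n := hn
  haveI : NeZero (3 * n ^ 2) := ⟨by positivity⟩
  have hcast : ((3 * n ^ 2 : ℕ) : ℤ) = 3 * (n : ℤ) ^ 2 := by push_cast; ring
  refine ⟨Stmt5Aux.arr n, fun x hx => Stmt5Aux.count_zero n x hx,
    fun x hx => Stmt5Aux.count_one n hn x hx, ?_, ?_, ?_, ?_⟩
  · intro i hi k hk
    rw [Finset.mem_Icc] at hi hk
    have hg : ∀ l, 1 ≤ l → l ≤ n → Stmt5Aux.arr n i l =
        (-1) ^ (i + l) * (((3 * (i - 1) + 1) + 3 * n * (l - 1) : ℕ) : ZMod (3 * n ^ 2)) := by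
      intro l _ _
      rw [Stmt5Aux.arr, show 3 * ((i - 1) + n * (l - 1)) + 1 =
        (3 * (i - 1) + 1) + 3 * n * (l - 1) by ring]
    rw [Stmt5Aux.sum_eq i (3 * (i - 1) + 1) n n (fun l => Stmt5Aux.arr n i l) hg k hk.2]
    intro h0
    rw [ZMod.intCast_zmod_eq_zero_iff_dvd, hcast] at h0
    exact Stmt5Aux.sIntAux_not_dvd n i _ n k (by omega) hn le_rfl hk.1 hk.2 h0
  · intro i hi k hk k' hk'
    rw [Finset.mem_Icc] at hi hk hk'
    have hg : ∀ l, 1 ≤ l → l ≤ n → Stmt5Aux.arr n i l =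
        (-1) ^ (i + l) * (((3 * (i - 1) + 1) + 3 * n * (l - 1) : ℕ) : ZMod (3 * n ^ 2)) := by
      intro l _ _
      rw [Stmt5Aux.arr, show 3 * ((i - 1) + n * (l - 1)) + 1 =
        (3 * (i - 1) + 1) + 3 * n * (l - 1) by ring]
    intro heq
    rw [Stmt5Aux.sum_eq i (3 * (i - 1) + 1) n n (fun l => Stmt5Aux.arr n i l) hg k hk.2,
      Stmt5Aux.sum_eq i (3 * (i - 1) + 1) n n (fun l => Stmt5Aux.arr n i l) hg k' hk'.2] at heq
    have hz : ((Stmt5Aux.sIntAux i (3 * (i - 1) + 1) n k -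
        Stmt5Aux.sIntAux i (3 * (i - 1) + 1) n k' : ℤ) : ZMod (3 * n ^ 2)) = 0 := by
      rw [Int.cast_sub, heq, sub_self]
    rw [ZMod.intCast_zmod_eq_zero_iff_dvd, hcast] at hz
    exact Stmt5Aux.sIntAux_inj n i (3 * (i - 1) + 1) n k k' (by omega) hn le_rfl
      hk.1 hk.2 hk'.1 hk'.2 hz
  · intro j hj k hk
    rw [Finset.mem_Icc] at hj hk
    have hg : ∀ l, 1 ≤ l → l ≤ n → Stmt5Aux.arr n l j =
        (-1) ^ (j + l) * (((3 * (n * (j - 1)) + 1) + 3 * 1 * (l - 1) : ℕ) : ZMod (3 * n ^ 2)) := by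
      intro l _ _
      rw [Stmt5Aux.arr, show 3 * ((l - 1) + n * (j - 1)) + 1 =
        (3 * (n * (j - 1)) + 1) + 3 * 1 * (l - 1) by ring, Nat.add_comm l j]
    rw [Stmt5Aux.sum_eq j (3 * (n * (j - 1)) + 1) 1 n (fun l => Stmt5Aux.arr n l j) hg k hk.2]
    intro h0
    rw [ZMod.intCast_zmod_eq_zero_iff_dvd, hcast] at h0
    exact Stmt5Aux.sIntAux_not_dvd n j _ 1 k (by omega) le_rfl hn hk.1 hk.2 h0
  · intro j hj k hk k' hk'
    rw [Finset.mem_Icc] at hj hk hk'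
    have hg : ∀ l, 1 ≤ l → l ≤ n → Stmt5Aux.arr n l j =
        (-1) ^ (j + l) * (((3 * (n * (j - 1)) + 1) + 3 * 1 * (l - 1) : ℕ) : ZMod (3 * n ^ 2)) := by
      intro l _ _
      rw [Stmt5Aux.arr, show 3 * ((l - 1) + n * (j - 1)) + 1 =
        (3 * (n * (j - 1)) + 1) + 3 * 1 * (l - 1) by ring, Nat.add_comm l j]
    intro heq
    rw [Stmt5Aux.sum_eq j (3 * (n * (j - 1)) + 1) 1 n (fun l => Stmt5Aux.arr n l j) hg k hk.2,
      Stmt5Aux.sum_eq j (3 * (n * (j - 1)) + 1) 1 n (fun l => Stmt5Aux.arr n l j) hg k' hk'.2] at heq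
    have hz : ((Stmt5Aux.sIntAux j (3 * (n * (j - 1)) + 1) 1 k -
        Stmt5Aux.sIntAux j (3 * (n * (j - 1)) + 1) 1 k' : ℤ) : ZMod (3 * n ^ 2)) = 0 := by
      rw [Int.cast_sub, heq, sub_self]
    rw [ZMod.intCast_zmod_eq_zero_iff_dvd, hcast] at hz
    exact Stmt5Aux.sIntAux_inj n j (3 * (n * (j - 1)) + 1) 1 k k' (by omega) le_rfl hn
      hk.1 hk.2 hk'.1 hk'.2 hz
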